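/- If a bounded linear operator T on a Banach space X can be embedded into a C_0-semigroup (i.e., there exists a strongly continuous semigroup (T(t))_{t≥0} with T(1)=T), then dim(ker T) is either zero or infinite, and codim(range T) is either zero or infinite. -/

import Mathlib

open Cardinal

open Set Filter Topology in

theorem aux_isClosed_range {X : Type*} [NormedAddCommGroup X] [NormedSpace ℂ X]
    [CompleteSpace X] (f : X →L[ℂ] X)
    (hfd : FiniteDimensional ℂ (X ⧸ LinearMap.range (f : X →ₗ[ℂ] X))) :
    IsClosed ((LinearMap.range (f : X →ₗ[ℂ] X) : Submodule ℂ X) : Set X) := by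
  set R : Submodule ℂ X := LinearMap.range (f : X →ₗ[ℂ] X) with hR
  obtain ⟨F, hF⟩ := Submodule.exists_isCompl R
  haveI : FiniteDimensional ℂ F :=
    Module.Finite.equiv (Submodule.quotientEquivOfIsCompl R F hF)
  haveI : CompleteSpace F := (Submodule.closed_of_finiteDimensional F).completeSpace_coe
  set K : Submodule ℂ X := LinearMap.ker (f : X →ₗ[ℂ] X) with hK
  haveI : IsClosed (K : Set X) := ContinuousLinearMap.isClosed_ker f
  -- the induced map on the quotient
  let g₀ : (X ⧸ K) →ₗ[ℂ] X := K.liftQ (f : X →ₗ[ℂ] X) le_rfl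
  have hg₀ : ∀ x : X, g₀ (Submodule.Quotient.mk x) = f x := fun x => rfl
  have hb : ∀ q : X ⧸ K, ‖g₀ q‖ ≤ ‖f‖ * ‖q‖ := by
    intro q
    refine le_of_forall_pos_le_add fun δ hδ => ?_
    have hε : (0:ℝ) < δ / (‖f‖ + 1) := by positivity
    obtain ⟨m, hm, hm'⟩ := Submodule.Quotient.norm_mk_lt q hε
    have hfm : g₀ q = f m := by rw [← hm]; rfl
    have h1 : ‖f m‖ ≤ ‖f‖ * ‖m‖ := f.le_opNorm m
    have h2 : ‖f‖ * ‖m‖ ≤ ‖f‖ * (‖q‖ + δ / (‖f‖ + 1)) := by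
      have := norm_nonneg f; nlinarith [hm'.le]
    have h3 : ‖f‖ * (‖q‖ + δ / (‖f‖ + 1)) ≤ ‖f‖ * ‖q‖ + δ := by
      have hf0 : (0:ℝ) ≤ ‖f‖ := norm_nonneg f
      have : ‖f‖ * (δ / (‖f‖ + 1)) ≤ δ := by
        rw [mul_div_assoc'] ; rw [div_le_iff₀ (by positivity)] ; nlinarith
      nlinarith
    rw [hfm]; linarith
  let g : (X ⧸ K) →L[ℂ] X := g₀.mkContinuous ‖f‖ hb
  have hg : ∀ x : X, g (Submodule.Quotient.mk x) = f x := fun x => rfl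
  let G : ((X ⧸ K) × F) →L[ℂ] X := g.coprod F.subtypeL
  have hG : ∀ p : (X ⧸ K) × F, G p = g p.1 + (p.2 : X) := fun p => rfl
  have hginR : ∀ q : X ⧸ K, g q ∈ R := by
    intro q
    obtain ⟨m, rfl⟩ := Submodule.Quotient.mk_surjective K q
    rw [hg]
    exact LinearMap.mem_range_self _ m
  have hinj : LinearMap.ker (G : ((X ⧸ K) × F) →ₗ[ℂ] X) = ⊥ := by
    rw [Submodule.eq_bot_iff]
    rintro ⟨q, v⟩ hqv
    rw [LinearMap.mem_ker] at hqv
    rw [ContinuousLinearMap.coe_coe, hG] at hqv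
    have hv : (v : X) ∈ R ⊓ F := by
      constructor
      · have : (v : X) = -(g q) := by
          have := hqv; simp only at this; linear_combination (norm := abel) this
        rw [this]
        exact neg_mem (hginR q)
      · exact v.2
    rw [hF.inf_eq_bot] at hv
    have hv0 : (v : X) = 0 := hv
    have hgq : g q = 0 := by
      have : g q + (v : X) = 0 := hqv
      rw [hv0, add_zero] at this; exact this
    obtain ⟨m, rfl⟩ := Submodule.Quotient.mk_surjective K q
    have hm : m ∈ K := by rw [hK]; exact LinearMap.mem_ker.2 hgq
    ext
    · exact (Submodule.Quotient.mk_eq_zero K).2 hm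
    · exact congrArg _ (Subtype.ext hv0)
  have hsurj : LinearMap.range (G : ((X ⧸ K) × F) →ₗ[ℂ] X) = ⊤ := by
    rw [LinearMap.range_eq_top]
    intro x
    have hx : x ∈ R ⊔ F := by rw [hF.sup_eq_top]; trivial
    obtain ⟨y, hy, z, hz, rfl⟩ := Submodule.mem_sup.1 hx
    obtain ⟨u, rfl⟩ := hy
    exact ⟨(Submodule.Quotient.mk u, ⟨z, hz⟩), rfl⟩
  let e := ContinuousLinearEquiv.ofBijective G hinj hsurj
  have he : ∀ p, e p = G p := fun p => rfl
  have hRset : (R : Set X) = e '' ((univ : Set (X ⧸ K)) ×ˢ ({0} : Set F)) := by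
    ext x
    constructor
    · rintro ⟨u, rfl⟩
      exact ⟨(Submodule.Quotient.mk u, 0), ⟨trivial, rfl⟩, by
        rw [he, hG]; simp [hg]⟩
    · rintro ⟨⟨q, v⟩, ⟨-, hv⟩, rfl⟩
      have hv0 : v = 0 := hv
      rw [he, hG, hv0]
      simpa using hginR q
  rw [hRset]
  exact e.toHomeomorph.isClosedMap _ (isClosed_univ.prod isClosed_singleton)

open Set Filter Topology in
/-- If a bounded linear operator `T` on a complex Banach space `X` embeds into a
`C₀`-semigroup, then `dim (ker T)` and `codim (range T)` are each zero or infinite. -/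
theorem stmt_0 {X : Type*} [NormedAddCommGroup X] [NormedSpace ℂ X] [CompleteSpace X]
    (T : X →L[ℂ] X) (S : ℝ → X →L[ℂ] X)
    (hS0 : S 0 = 1)
    (hSadd : ∀ t s : ℝ, 0 ≤ t → 0 ≤ s → S (t + s) = S t ∘L S s)
    (hScont : ∀ x : X, ContinuousOn (fun t : ℝ => S t x) (Set.Ici 0))
    (hS1 : S 1 = T) :
    (Module.rank ℂ (LinearMap.ker (T : X →ₗ[ℂ] X)) = 0 ∨
      ℵ₀ ≤ Module.rank ℂ (LinearMap.ker (T : X →ₗ[ℂ] X))) ∧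
    (Module.rank ℂ (X ⧸ LinearMap.range (T : X →ₗ[ℂ] X)) = 0 ∨
      ℵ₀ ≤ Module.rank ℂ (X ⧸ LinearMap.range (T : X →ₗ[ℂ] X))) := by
  have hcomp : ∀ t s : ℝ, 0 ≤ t → 0 ≤ s → ∀ x : X, S (t + s) x = S t (S s x) := by
    intro t s ht hs x; rw [hSadd t s ht hs]; rfl
  -- kernels are monotone, ranges are antitone
  set Kr : ℝ → Submodule ℂ X := fun t => LinearMap.ker ((S t : X →L[ℂ] X) : X →ₗ[ℂ] X) with hKr
  set Rg : ℝ → Submodule ℂ X := fun t => LinearMap.range ((S t : X →L[ℂ] X) : X →ₗ[ℂ] X) with hRg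
  have hker_mem : ∀ (t : ℝ) (x : X), x ∈ Kr t ↔ S t x = 0 := fun t x => Iff.rfl
  have hrg_mem : ∀ (t : ℝ) (x : X), x ∈ Rg t ↔ ∃ y, S t y = x := fun t x => Iff.rfl
  have hker_mono : ∀ s t : ℝ, 0 < s → s ≤ t → Kr s ≤ Kr t := by
    intro s t hs hst x hx
    rw [hker_mem] at *
    have h1 : t = (t - s) + s := by ring
    rw [h1, hcomp (t-s) s (by linarith) hs.le, hx, map_zero]
  have hrg_anti : ∀ s t : ℝ, 0 < s → s ≤ t → Rg t ≤ Rg s := by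
    intro s t hs hst x hx
    obtain ⟨y, hy⟩ := hx
    refine ⟨S (t - s) y, ?_⟩
    show S s (S (t - s) y) = x
    rw [← hcomp s (t - s) hs.le (by linarith), show s + (t - s) = t by ring]
    exact hy
  -- the orbit limit
  have hlim : ∀ x : X, Tendsto (fun t : ℝ => S t x) (𝓝[>] (0:ℝ)) (𝓝 x) := by
    intro x
    have h0 : ContinuousWithinAt (fun t : ℝ => S t x) (Ici 0) 0 :=
      hScont x 0 Set.self_mem_Ici
    have h1 := h0.tendsto
    simp only [hS0, ContinuousLinearMap.one_apply] at h1
    exact h1.mono_left (nhdsWithin_mono 0 Set.Ioi_subset_Ici_self)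
  constructor
  · -- kernel part
    rw [or_iff_not_imp_right]
    intro hfin
    have hKT : LinearMap.ker (T : X →ₗ[ℂ] X) = Kr 1 := by rw [hKr]; simp [hS1]
    haveI hfd1 : FiniteDimensional ℂ (Kr 1) := by
      rw [← hKT]
      exact Module.rank_lt_aleph0_iff.1 (not_le.1 hfin)
    have hfd : ∀ t ∈ Ioc (0:ℝ) 1, FiniteDimensional ℂ (Kr t) := fun t ht =>
      Submodule.finiteDimensional_of_le (hker_mono t 1 ht.1 ht.2)
    -- choose the minimizing time
    set D : Set ℕ := {n | ∃ t, t ∈ Ioc (0:ℝ) 1 ∧ Module.finrank ℂ (Kr t) = n} with hD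
    have hDne : D.Nonempty := ⟨_, 1, ⟨one_pos, le_rfl⟩, rfl⟩
    obtain ⟨t0, ht0, hft0⟩ : ∃ t, t ∈ Ioc (0:ℝ) 1 ∧ Module.finrank ℂ (Kr t) = sInf D :=
      Nat.sInf_mem hDne
    have hmin : ∀ t ∈ Ioc (0:ℝ) 1, sInf D ≤ Module.finrank ℂ (Kr t) := fun t ht =>
      Nat.sInf_le ⟨t, ht, rfl⟩
    -- kernels are constant on (0, t0]
    have hconst : ∀ t ∈ Ioc (0:ℝ) t0, Kr t = Kr t0 := by
      intro t ht
      haveI := hfd t ⟨ht.1, ht.2.trans ht0.2⟩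
      haveI := hfd t0 ht0
      refine Submodule.eq_of_le_of_finrank_le (hker_mono t t0 ht.1 ht.2) ?_
      rw [hft0]
      exact hmin t ⟨ht.1, ht.2.trans ht0.2⟩
    -- the common kernel is trivial
    have hbot : Kr t0 = ⊥ := by
      rw [Submodule.eq_bot_iff]
      intro x hx
      have hzero : ∀ t ∈ Ioc (0:ℝ) t0, S t x = 0 := by
        intro t ht
        have : x ∈ Kr t := by rw [hconst t ht]; exact hx
        exact (hker_mem t x).1 this
      have hev : (fun t : ℝ => S t x) =ᶠ[𝓝[>] (0:ℝ)] fun _ => (0:X) :=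
        Filter.eventuallyEq_of_mem (Ioc_mem_nhdsGT_of_mem ⟨le_refl 0, ht0.1⟩) hzero
      have h1 : Tendsto (fun t : ℝ => S t x) (𝓝[>] (0:ℝ)) (𝓝 0) :=
        (tendsto_congr' hev).2 tendsto_const_nhds
      exact tendsto_nhds_unique (hlim x) h1
    -- iterate
    have hiter : ∀ k : ℕ, Kr ((k + 1 : ℕ) * t0) = ⊥ := by
      intro k
      induction k with
      | zero => simpa using hbot
      | succ k ih =>
        rw [Submodule.eq_bot_iff]
        intro x hx
        rw [hker_mem] at hx
        have hcast : ((k + 2 : ℕ) : ℝ) * t0 = t0 + ((k + 1 : ℕ) : ℝ) * t0 := by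
          push_cast; ring
        have hpos : (0:ℝ) ≤ ((k + 1 : ℕ) : ℝ) * t0 := mul_nonneg (by positivity) ht0.1.le
        rw [hcast, hcomp t0 _ ht0.1.le hpos] at hx
        have h2 : S ((k + 1 : ℕ) * t0) x ∈ Kr t0 := (hker_mem _ _).2 hx
        rw [hbot, Submodule.mem_bot] at h2
        have h3 : x ∈ Kr ((k + 1 : ℕ) * t0) := (hker_mem _ _).2 h2
        rw [ih, Submodule.mem_bot] at h3
        exact h3
    obtain ⟨n, hn⟩ := exists_nat_ge (1 / t0)
    have h1n : (1:ℝ) ≤ ((n + 1 : ℕ) : ℝ) * t0 := by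
      have : 1 / t0 * t0 ≤ ((n:ℝ)) * t0 := by
        apply mul_le_mul_of_nonneg_right hn ht0.1.le
      rw [one_div_mul_cancel (ne_of_gt ht0.1)] at this
      push_cast
      nlinarith [ht0.1]
    have hK1 : Kr 1 = ⊥ := by
      rw [Submodule.eq_bot_iff]
      intro x hx
      have := hker_mono 1 _ one_pos h1n hx
      rw [hiter n, Submodule.mem_bot] at this
      exact this
    rw [hKT, hK1]
    exact rank_bot ℂ X
  · rw [or_iff_not_imp_right]
    intro hfin
    have hRT : LinearMap.range (T : X →ₗ[ℂ] X) = Rg 1 := by rw [hRg]; simp [hS1]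
    haveI hfd1 : FiniteDimensional ℂ (X ⧸ Rg 1) := by
      rw [← hRT]; exact Module.rank_lt_aleph0_iff.1 (not_le.1 hfin)
    have hfd : ∀ t ∈ Ioc (0:ℝ) 1, FiniteDimensional ℂ (X ⧸ Rg t) := by
      intro t ht
      have hle : Rg 1 ≤ Rg t := hrg_anti t 1 ht.1 ht.2
      let φ : (X ⧸ Rg 1) →ₗ[ℂ] (X ⧸ Rg t) :=
        (Rg 1).liftQ (Rg t).mkQ (by rw [Submodule.ker_mkQ]; exact hle)
      have hφ : Function.Surjective φ := by
        intro z
        obtain ⟨x, rfl⟩ := Submodule.Quotient.mk_surjective _ z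
        exact ⟨Submodule.Quotient.mk x, rfl⟩
      exact Module.Finite.of_surjective φ hφ
    set D : Set ℕ := {n | ∃ t, t ∈ Ioc (0:ℝ) 1 ∧ Module.finrank ℂ (X ⧸ Rg t) = n} with hD
    have hDne : D.Nonempty := ⟨_, 1, ⟨one_pos, le_rfl⟩, rfl⟩
    obtain ⟨t0, ht0, hft0⟩ : ∃ t, t ∈ Ioc (0:ℝ) 1 ∧ Module.finrank ℂ (X ⧸ Rg t) = sInf D :=
      Nat.sInf_mem hDne
    have hmin : ∀ t ∈ Ioc (0:ℝ) 1, sInf D ≤ Module.finrank ℂ (X ⧸ Rg t) := fun t ht =>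
      Nat.sInf_le ⟨t, ht, rfl⟩
    -- the ranges are constant on (0, t0]
    have hconst : ∀ t ∈ Ioc (0:ℝ) t0, Rg t = Rg t0 := by
      intro t ht
      have ht1 : t ∈ Ioc (0:ℝ) 1 := ⟨ht.1, ht.2.trans ht0.2⟩
      haveI := hfd t0 ht0
      haveI := hfd t ht1
      have hle : Rg t0 ≤ Rg t := hrg_anti t t0 ht.1 ht.2
      set φ : (X ⧸ Rg t0) →ₗ[ℂ] (X ⧸ Rg t) :=
        (Rg t0).liftQ (Rg t).mkQ (by rw [Submodule.ker_mkQ]; exact hle) with hφdef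
      have hφ : Function.Surjective φ := by
        intro z
        obtain ⟨x, rfl⟩ := Submodule.Quotient.mk_surjective _ z
        exact ⟨Submodule.Quotient.mk x, rfl⟩
      have hrange : LinearMap.range φ = ⊤ := LinearMap.range_eq_top.2 hφ
      have hrn := LinearMap.finrank_range_add_finrank_ker φ
      rw [hrange, finrank_top] at hrn
      have hle1 : sInf D ≤ Module.finrank ℂ (X ⧸ Rg t) := hmin t ht1
      have hker0 : Module.finrank ℂ (LinearMap.ker φ) = 0 := by omega
      have hkerbot : LinearMap.ker φ = ⊥ := Submodule.finrank_eq_zero.1 hker0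
      refine le_antisymm ?_ hle
      intro x hx
      have h0 : φ (Submodule.Quotient.mk x) = 0 := by
        show (Rg t).mkQ x = 0
        rw [Submodule.mkQ_apply, Submodule.Quotient.mk_eq_zero]
        exact hx
      have hmem : Submodule.Quotient.mk x ∈ LinearMap.ker φ := LinearMap.mem_ker.2 h0
      rw [hkerbot, Submodule.mem_bot] at hmem
      exact (Submodule.Quotient.mk_eq_zero _).1 hmem
    -- composition/map identity
    have hmap : ∀ a b : ℝ, 0 ≤ a → 0 ≤ b →
        Rg (a + b) = Submodule.map ((S a : X →L[ℂ] X) : X →ₗ[ℂ] X) (Rg b) := by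
      intro a b ha hb
      show LinearMap.range ((S (a + b) : X →L[ℂ] X) : X →ₗ[ℂ] X) = _
      rw [hSadd a b ha hb, ContinuousLinearMap.toLinearMap_comp]
      exact LinearMap.range_comp _ _
    have ha2 : t0 / 2 ∈ Ioc (0:ℝ) t0 := ⟨by linarith [ht0.1], by linarith [ht0.1]⟩
    have hmapR : Submodule.map ((S (t0/2) : X →L[ℂ] X) : X →ₗ[ℂ] X) (Rg t0) = Rg t0 := by
      conv_lhs => rw [← hconst (t0/2) ha2]
      rw [← hmap (t0/2) (t0/2) ha2.1.le ha2.1.le, show t0/2 + t0/2 = t0 by ring]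
    have hiter : ∀ k : ℕ, Rg ((k + 1 : ℕ) * (t0/2)) = Rg t0 := by
      intro k
      induction k with
      | zero => simpa using hconst (t0/2) ha2
      | succ k ih =>
        have hcast : ((k + 1 + 1 : ℕ) : ℝ) * (t0/2) = t0/2 + ((k + 1 : ℕ) : ℝ) * (t0/2) := by
          push_cast; ring
        have hpos : (0:ℝ) ≤ ((k + 1 : ℕ) : ℝ) * (t0/2) := mul_nonneg (by positivity) ha2.1.le
        rw [hcast, hmap (t0/2) _ ha2.1.le hpos, ih, hmapR]
    obtain ⟨n, hn⟩ := exists_nat_ge (1 / (t0/2))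
    have h1n : (1:ℝ) ≤ ((n + 1 : ℕ) : ℝ) * (t0/2) := by
      have h2 : 1 / (t0/2) * (t0/2) ≤ ((n:ℝ)) * (t0/2) :=
        mul_le_mul_of_nonneg_right hn ha2.1.le
      rw [one_div_mul_cancel (ne_of_gt ha2.1)] at h2
      push_cast
      nlinarith [ha2.1]
    have hRg1t0 : Rg 1 = Rg t0 := by
      refine le_antisymm (hrg_anti t0 1 ht0.1 ht0.2) ?_
      rw [← hiter n]
      exact hrg_anti 1 _ one_pos h1n
    have hdense : ∀ x : X, x ∈ closure ((Rg t0 : Submodule ℂ X) : Set X) := by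
      intro x
      refine mem_closure_of_tendsto (hlim x) ?_
      filter_upwards [Ioc_mem_nhdsGT_of_mem (⟨le_refl 0, ht0.1⟩ : (0:ℝ) ∈ Ico 0 t0)] with t ht
      have : S t x ∈ Rg t0 := by
        rw [← hconst t ht]
        exact ⟨x, rfl⟩
      exact this
    haveI hfdt0 : FiniteDimensional ℂ (X ⧸ Rg t0) := hfd t0 ht0
    have hclosed : IsClosed ((Rg t0 : Submodule ℂ X) : Set X) :=
      aux_isClosed_range (S t0) hfdt0
    have htop : Rg t0 = ⊤ := by
      rw [Submodule.eq_top_iff']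
      intro x
      have hx := hdense x
      rw [hclosed.closure_eq] at hx
      exact hx
    have hT : LinearMap.range (T : X →ₗ[ℂ] X) = ⊤ := by rw [hRT, hRg1t0, htop]
    haveI := Submodule.Quotient.subsingleton_iff.2 hT
    exact rank_subsingleton' _ _
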